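/- Let N be a project network, k ≤ k_max, and X a k-crashing plan of N; let N_i, X_i, C_i be the associated decomposition. Then for every i with 1 ≤ i < k, cost(C_i) ≤ cost(C_{i+1}). -/

import Mathlib

noncomputable section
open scoped Classical
open Finset

/-- A project network: a finite DAG (witnessed by a rank function) with a single
source `s` and a single sink `t`; each edge `e` carries a minimum length `a e`,
a normal length `b e`, and a nonnegative cost slope `c e`. -/
structure Project where
  V : Type
  E : Type
  [instFV : Fintype V]
  [instDV : DecidableEq V]
  [instFE : Fintype E]
  [instDE : DecidableEq E]
  src : E → V
  dst : E → V
  s : V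
  t : V
  a : E → ℤ
  b : E → ℤ
  c : E → ℝ
  length_lb : ∀ e, a e ≤ b e
  cost_nonneg : ∀ e, 0 ≤ c e
  rank : V → ℕ
  acyclic : ∀ e, rank (src e) < rank (dst e)
  s_no_in : ∀ e, dst e ≠ s
  t_no_out : ∀ e, src e ≠ t
  source_unique : ∀ v, v ≠ s → ∃ e, dst e = v
  sink_unique : ∀ v, v ≠ t → ∃ e, src e = v

attribute [instance] Project.instFV Project.instDV Project.instFE Project.instDE

namespace Project

/-- A network state: a subset of the edges together with current edge lengths. -/
structure State (P : Project) where
  edges : Finset P.E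
  len : P.E → ℤ

variable (P : Project)

/-- `es` is a directed path from the source `s` to the sink `t` using edges of `H`. -/
def IsPath (H : State P) (es : List P.E) : Prop :=
  es ≠ [] ∧ (∀ e ∈ es, e ∈ H.edges) ∧
  List.Chain' (fun e f => P.dst e = P.src f) es ∧
  (∀ e ∈ es.head?, P.src e = P.s) ∧ (∀ e ∈ es.getLast?, P.dst e = P.t)

/-- The length of a path in state `H`. -/
def pathLen (H : State P) (es : List P.E) : ℤ := (es.map H.len).sum

/-- The duration of `H`: the maximum total length of a directed `s`-`t` path. -/
def duration (H : State P) : ℤ :=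
  sSup {L : ℤ | ∃ es, IsPath P H es ∧ pathLen P H es = L}

/-- The critical graph `H*`: the edges of `H` lying on some maximum-length path. -/
def critical (H : State P) : State P :=
  ⟨H.edges.filter (fun e => ∃ es, IsPath P H es ∧ pathLen P H es = duration P H ∧ e ∈ es),
   H.len⟩

/-- An accelerate plan is feasible if each edge is shortened by at most `b e - a e`. -/
def Feasible (X : P.E → ℕ) : Prop := ∀ e, (X e : ℤ) ≤ P.b e - P.a e

/-- The original network `N` (all edges, with their normal lengths). -/
def base : State P := ⟨Finset.univ, P.b⟩

/-- The accelerated network `N(X)`, whose edge lengths are `b e - X e`. -/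
def applyPlan (X : P.E → ℕ) : State P := ⟨Finset.univ, fun e => P.b e - X e⟩

/-- The cost of a plan: `∑ e, c e * x e`. -/
def cost (X : P.E → ℕ) : ℝ := ∑ e, P.c e * (X e : ℝ)

/-- The cost of a set of edges: the sum of their cost slopes. -/
def costSet (C : Finset P.E) : ℝ := ∑ e ∈ C, P.c e

/-- `X` is a `k`-crashing plan of `N`: it is feasible and shortens the duration by `k`. -/
def Crashing (k : ℤ) (X : P.E → ℕ) : Prop :=
  Feasible P X ∧ duration P (applyPlan P X) ≤ duration P (base P) - k

/-- The plan shortening every edge maximally. -/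
def fullPlan : P.E → ℕ := fun e => (P.b e - P.a e).toNat

/-- `k_max = d(N) - d(N(X_full))`. -/
def kmax : ℤ := duration P (base P) - duration P (applyPlan P (fullPlan P))

/-- `C` is the cut of `H` determined by the vertex partition `(S, Sᶜ)` with `s ∈ S`, `t ∉ S`. -/
def IsCutWith (H : State P) (S : Finset P.V) (C : Finset P.E) : Prop :=
  P.s ∈ S ∧ P.t ∉ S ∧ C = H.edges.filter (fun e => P.src e ∈ S ∧ P.dst e ∉ S)

/-- `C` is a cut of `H`. -/
def IsCut (H : State P) (C : Finset P.E) : Prop := ∃ S, IsCutWith P H S C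

/-- The plan `X` contains a cut of `H` (some cut lies inside the support of `X`). -/
def PlanContainsCut (H : State P) (X : P.E → ℕ) : Prop :=
  ∃ C, IsCut P H C ∧ ∀ e ∈ C, 1 ≤ X e

/-- The edge set `D` contains a cut of `H`. -/
def ContainsCut (H : State P) (D : Finset P.E) : Prop :=
  ∃ C, IsCut P H C ∧ C ⊆ D

/-- `C = mincut(H, X)`: a minimum-cost cut of `H` among all cuts contained in `X`. -/
def IsMinCutIn (H : State P) (X : P.E → ℕ) (C : Finset P.E) : Prop :=
  IsCut P H C ∧ (∀ e ∈ C, 1 ≤ X e) ∧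
  ∀ C', IsCut P H C' → (∀ e ∈ C', 1 ≤ X e) → costSet P C ≤ costSet P C'

/-- `H(C)`: the state `H` with every edge of `C` shortened by `1`. -/
def shorten (H : State P) (C : Finset P.E) : State P :=
  ⟨H.edges, fun e => H.len e - if e ∈ C then 1 else 0⟩

/-- The decomposition `N_i, X_i, C_i` associated to a `k`-crashing plan `X`:
`N_1 = N`, `X_1 = X`, `C_i = mincut(N_i*, X_i)`, and for `1 < i ≤ k`,
`N_i = N_{i-1}*(C_{i-1})` and `X_i = X_{i-1} ∖ C_{i-1}`. -/
def Decomp (X : P.E → ℕ) (k : ℕ) (Ns : ℕ → State P) (Xs : ℕ → P.E → ℕ)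
    (Cs : ℕ → Finset P.E) : Prop :=
  Ns 1 = base P ∧ Xs 1 = X ∧
  (∀ i, 1 ≤ i → i ≤ k → IsMinCutIn P (critical P (Ns i)) (Xs i) (Cs i)) ∧
  ∀ i, 1 < i → i ≤ k →
    Ns i = shorten P (critical P (Ns (i - 1))) (Cs (i - 1)) ∧
    Xs i = fun e => Xs (i - 1) e - if e ∈ Cs (i - 1) then 1 else 0

/-- The edges of `H` within the vertex set `S`. -/
def withinEdges (H : State P) (S : Finset P.V) : Finset P.E :=
  H.edges.filter (fun e => P.src e ∈ S ∧ P.dst e ∈ S)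

/-- The edges of `H` within the complement of the vertex set `S`. -/
def outsideEdges (H : State P) (S : Finset P.V) : Finset P.E :=
  H.edges.filter (fun e => P.src e ∉ S ∧ P.dst e ∉ S)

/-- The edges of `H` going from the complement of `S` back into `S`. -/
def reverseCut (H : State P) (S : Finset P.V) : Finset P.E :=
  H.edges.filter (fun e => P.src e ∉ S ∧ P.dst e ∈ S)

/-- `Z` is an `m`-crashing plan of the accelerated network `N(Y)`. -/
def CrashesBy (Y Z : P.E → ℕ) (m : ℤ) : Prop :=
  Feasible P (fun e => Y e + Z e) ∧
  duration P (applyPlan P (fun e => Y e + Z e)) ≤ duration P (applyPlan P Y) - m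

/-- `Z` is a minimum-cost `1`-crashing plan of the accelerated network `N(Y)`. -/
def MinOneCrashOf (Y Z : P.E → ℕ) : Prop :=
  CrashesBy P Y Z 1 ∧ ∀ Z', CrashesBy P Y Z' 1 → cost P Z ≤ cost P Z'

end Project

namespace CrashAux

open Project

variable {P : Project}

/-- Edge-chain predicate: consecutive edges are incident. -/
def EChain (P : Project) (es : List P.E) : Prop :=
  List.Chain' (fun e f => P.dst e = P.src f) es

lemma echain_nodup {es : List P.E} (h : EChain P es) : es.Nodup := by
  have hch : List.Chain' (fun e f => P.rank (P.src e) < P.rank (P.src f)) es := by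
    refine List.IsChain.imp ?_ h
    intro e f hef
    have h1 := P.acyclic e
    rw [hef] at h1
    exact h1
  have h2 : List.Chain' (· < ·) (es.map fun e => P.rank (P.src e)) :=
    (List.isChain_map _).mpr hch
  have h3 : (es.map fun e => P.rank (P.src e)).Nodup :=
    List.Pairwise.imp ne_of_lt (List.isChain_iff_pairwise.mp h2)
  exact List.Nodup.of_map _ h3

lemma isPath_echain {H : State P} {es : List P.E} (h : IsPath P H es) : EChain P es :=
  h.2.2.1

lemma pathSet_subset (H : State P) :
    {L : ℤ | ∃ es, IsPath P H es ∧ pathLen P H es = L} ⊆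
      ↑((Finset.univ : Finset P.E).powerset.image fun s => ∑ e ∈ s, H.len e) := by
  rintro L ⟨es, hp, rfl⟩
  simp only [Finset.coe_image, Set.mem_image, Finset.mem_coe, Finset.mem_powerset]
  refine ⟨es.toFinset, Finset.subset_univ _, ?_⟩
  rw [List.sum_toFinset _ (echain_nodup (isPath_echain hp))]
  rfl

lemma pathSet_finite (H : State P) :
    {L : ℤ | ∃ es, IsPath P H es ∧ pathLen P H es = L}.Finite :=
  Set.Finite.subset (Finset.finite_toSet _) (pathSet_subset H)

lemma pathLen_le_duration {H : State P} {es : List P.E} (h : IsPath P H es) :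
    pathLen P H es ≤ duration P H :=
  le_csSup (Set.Finite.bddAbove (pathSet_finite H)) ⟨es, h, rfl⟩

lemma duration_le {H : State P} {a : ℤ} (hne : ∃ es, IsPath P H es)
    (hub : ∀ es, IsPath P H es → pathLen P H es ≤ a) : duration P H ≤ a := by
  obtain ⟨es, hes⟩ := hne
  refine csSup_le ⟨pathLen P H es, es, hes, rfl⟩ ?_
  rintro L ⟨es', hes', rfl⟩
  exact hub es' hes'

lemma pathLen_append (H : State P) (A B : List P.E) :
    pathLen P H (A ++ B) = pathLen P H A + pathLen P H B := by
  simp [pathLen]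

lemma pathLen_cons (H : State P) (e : P.E) (B : List P.E) :
    pathLen P H (e :: B) = H.len e + pathLen P H B := by
  simp [pathLen]

/-- Crossing lemma: a chain starting in `S` and ending outside `S` has a forward
crossing edge. -/
lemma exists_crossing (S : Finset P.V) :
    ∀ es : List P.E, es ≠ [] → EChain P es →
    (∀ f ∈ es.head?, P.src f ∈ S) → (∀ f ∈ es.getLast?, P.dst f ∉ S) →
    ∃ e ∈ es, P.src e ∈ S ∧ P.dst e ∉ S
  | [], h, _, _, _ => absurd rfl h
  | [e], _, _, hh, hl => ⟨e, List.mem_singleton.mpr rfl, hh e (by simp), hl e (by simp)⟩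
  | e :: f :: r, _, hc, hh, hl => by
    by_cases hd : P.dst e ∈ S
    · have hc' := (List.isChain_cons_cons.mp hc)
      obtain ⟨g, hg, h1, h2⟩ := exists_crossing S (f :: r) (by simp) hc'.2
        (by
          intro x hx
          simp only [List.head?_cons, Option.mem_some_iff] at hx
          subst hx
          rw [← hc'.1]
          exact hd)
        (by
          intro x hx
          rw [← List.getLast?_cons_cons] at hx
          exact hl x hx)
      exact ⟨g, List.mem_cons_of_mem _ hg, h1, h2⟩
    · exact ⟨e, List.mem_cons_self, hh e (by simp), hd⟩

/-- The step relation generated by edges satisfying `Q`. -/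
def stepRel (P : Project) (Q : P.E → Prop) : P.V → P.V → Prop :=
  fun a b => ∃ f, Q f ∧ P.src f = a ∧ P.dst f = b

lemma rtg_list {Q : P.E → Prop} {u v : P.V}
    (h : Relation.ReflTransGen (stepRel P Q) u v) :
    u = v ∨ ∃ es : List P.E, es ≠ [] ∧ (∀ f ∈ es, Q f) ∧ EChain P es ∧
      (∀ f ∈ es.head?, P.src f = u) ∧ (∀ f ∈ es.getLast?, P.dst f = v) := by
  induction h with
  | refl => exact Or.inl rfl
  | tail hab hbc ih =>
    obtain ⟨f, hQ, hs, hd⟩ := hbc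
    rcases ih with rfl | ⟨es, hne, hmem, hch, hh, hl⟩
    · right
      refine ⟨[f], by simp, by simpa using hQ, List.isChain_singleton f, ?_, ?_⟩
      · intro g hg; simp only [List.head?_cons, Option.mem_some_iff] at hg; subst hg; exact hs
      · intro g hg; simp only [List.getLast?_singleton, Option.mem_some_iff] at hg
        subst hg; exact hd
    · right
      refine ⟨es ++ [f], by simp, ?_, ?_, ?_, ?_⟩
      · intro g hg
        rcases List.mem_append.mp hg with h' | h'
        · exact hmem g h'
        · simp only [List.mem_singleton] at h'; subst h'; exact hQ
      · refine (List.isChain_append).mpr ⟨hch, List.isChain_singleton f, ?_⟩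
        intro x hx y hy
        simp only [List.head?_cons, Option.mem_some_iff] at hy
        subst hy
        rw [hl x hx, hs]
      · intro g hg
        rw [List.head?_append] at hg
        cases hhe : es.head? with
        | none => exact absurd hhe (by simpa using hne)
        | some w =>
          rw [hhe] at hg
          simp only [Option.or, Option.mem_some_iff] at hg
          subst hg
          exact hh _ hhe
      · intro g hg
        rw [List.getLast?_concat] at hg
        simp only [Option.mem_some_iff] at hg
        subst hg
        exact hd

/-- The junction vertex at a split: the endpoint of the prefix (or `s` if empty). -/
def jnV (P : Project) (A : List P.E) : P.V :=
  (A.getLast?.map P.dst).getD P.s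

lemma jnV_nil : jnV P ([] : List P.E) = P.s := rfl

lemma jnV_ne_nil {A : List P.E} (h : A ≠ []) : jnV P A = P.dst (A.getLast h) := by
  simp [jnV, List.getLast?_eq_getLast h]

/-- From a path split `A ++ B` with `B ≠ []`, the head of `B` starts at the junction. -/
lemma src_head_of_split {H : State P} {A B : List P.E} (hQ : IsPath P H (A ++ B))
    (hB : B ≠ []) : P.src (B.head hB) = jnV P A := by
  rcases List.eq_nil_or_concat A with rfl | ⟨A', a, rfl⟩
  · rw [jnV_nil]
    have := hQ.2.2.2.1 (B.head hB)
    simp only [List.nil_append] at this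
    exact this (by rw [List.head?_eq_head hB]; rfl)
  · rw [List.concat_eq_append] at hQ ⊢
    have hlink := (List.isChain_append.mp hQ.2.2.1).2.2
    have h1 := hlink a (by rw [List.getLast?_concat]; rfl) (B.head hB)
      (by rw [List.head?_eq_head hB]; rfl)
    rw [jnV_ne_nil (by simp : A' ++ [a] ≠ [])]
    rw [← h1]
    congr 1
    simp [List.getLast_append]

/-- Splicing two maximum paths at a common junction. -/
lemma splice_le {H : State P} {A B A' B' : List P.E}
    (hQ : IsPath P H (A ++ B))
    (hQ' : IsPath P H (A' ++ B'))
    (hj : jnV P A = jnV P A') :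
    pathLen P H A + pathLen P H B' ≤ duration P H := by
  by_cases hA : A = []
  · subst hA
    by_cases hA' : A' = []
    · subst hA'
      simpa [pathLen] using pathLen_le_duration hQ'
    · exfalso
      rw [jnV_nil, jnV_ne_nil hA'] at hj
      exact P.s_no_in (A'.getLast hA') hj.symm
  · by_cases hB' : B' = []
    · subst hB'
      have hA'ne : A' ≠ [] := by
        intro h
        subst h
        exact hQ'.1 rfl
      -- jnV A' = t
      have hjt : jnV P A' = P.t := by
        rw [jnV_ne_nil hA'ne]
        have := hQ'.2.2.2.2 (A'.getLast hA'ne)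
        simp only [List.append_nil] at this
        exact this (by rw [List.getLast?_eq_getLast hA'ne]; rfl)
      have hAt : P.dst (A.getLast hA) = P.t := by rw [← jnV_ne_nil hA, hj, hjt]
      have hpathA : IsPath P H A := by
        refine ⟨hA, ?_, (List.isChain_append.mp hQ.2.2.1).1, ?_, ?_⟩
        · intro f hf; exact hQ.2.1 f (List.mem_append.mpr (Or.inl hf))
        · intro f hf
          refine hQ.2.2.2.1 f ?_
          rw [List.head?_append, hf]
          rfl
        · intro f hf
          rw [List.getLast?_eq_getLast hA] at hf
          simp only [Option.mem_some_iff] at hf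
          subst hf
          exact hAt
      simpa [pathLen] using pathLen_le_duration hpathA
    · -- general case: A ≠ [], B' ≠ []
      have hlink : P.dst (A.getLast hA) = P.src (B'.head hB') := by
        rw [src_head_of_split hQ' hB', ← hj, jnV_ne_nil hA]
      have hpath : IsPath P H (A ++ B') := by
        refine ⟨by simp [hA], ?_, ?_, ?_, ?_⟩
        · intro f hf
          rcases List.mem_append.mp hf with h' | h'
          · exact hQ.2.1 f (List.mem_append.mpr (Or.inl h'))
          · exact hQ'.2.1 f (List.mem_append.mpr (Or.inr h'))
        · refine List.isChain_append.mpr ⟨(List.isChain_append.mp hQ.2.2.1).1,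
            (List.isChain_append.mp hQ'.2.2.1).2.1, ?_⟩
          intro x hx y hy
          rw [List.getLast?_eq_getLast hA] at hx
          rw [List.head?_eq_head hB'] at hy
          simp only [Option.mem_some_iff] at hx hy
          subst hx; subst hy
          exact hlink
        · intro f hf
          refine hQ.2.2.2.1 f ?_
          rw [List.head?_append] at hf ⊢
          rcases hha : A.head? with _ | w
          · exact absurd (List.head?_eq_none_iff.mp hha) hA
          · rw [hha] at hf; exact hf
        · intro f hf
          refine hQ'.2.2.2.2 f ?_
          rw [List.getLast?_append_of_ne_nil _ hB'] at hf
          rw [List.getLast?_append_of_ne_nil _ hB']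
          exact hf
      have := pathLen_le_duration hpath
      rwa [pathLen_append] at this

/-- Junction uniqueness for maximum paths. -/
lemma key1 {H : State P} {A B A' B' : List P.E}
    (hQ : IsPath P H (A ++ B)) (hlQ : pathLen P H (A ++ B) = duration P H)
    (hQ' : IsPath P H (A' ++ B')) (hlQ' : pathLen P H (A' ++ B') = duration P H)
    (hj : jnV P A = jnV P A') :
    pathLen P H A = pathLen P H A' := by
  have h1 := splice_le hQ hQ' hj
  have h2 := splice_le hQ' hQ hj.symm
  rw [pathLen_append] at hlQ hlQ'
  linarith

lemma head?_append_left {α : Type*} {A : List α} (L : List α) (h : A ≠ []) :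
    (A ++ L).head? = A.head? := by
  rcases A with _ | ⟨a, r⟩
  · exact absurd rfl h
  · rfl

lemma getLast?_cons_ne {α : Type*} (a : α) {l : List α} (h : l ≠ []) :
    (a :: l).getLast? = l.getLast? := by
  rcases l with _ | ⟨b, r⟩
  · exact absurd rfl h
  · rw [List.getLast?_cons_cons]

lemma jnV_concat (A : List P.E) (e : P.E) : jnV P (A ++ [e]) = P.dst e := by
  simp [jnV, List.getLast?_concat]

lemma claimR {H : State P} (E₀ : Finset P.E)
    (hcrit : ∀ e ∈ E₀, ∃ Q, IsPath P H Q ∧ pathLen P H Q = duration P H ∧ e ∈ Q) :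
    ∀ R : List P.E, R ≠ [] → (∀ f ∈ R, f ∈ E₀) → EChain P R →
      (∀ f ∈ R.getLast?, P.dst f = P.t) →
      ∀ A B : List P.E, IsPath P H (A ++ B) → pathLen P H (A ++ B) = duration P H →
      (∀ f ∈ R.head?, jnV P A = P.src f) →
      pathLen P H A + pathLen P H R = duration P H := by
  intro R
  induction R with
  | nil => intro h; exact absurd rfl h
  | cons e R' ih =>
    intro _ hmem hch hlast A B hAB hlen hj
    obtain ⟨Qe, hQe, hQel, heQ⟩ := hcrit e (hmem e (List.mem_cons_self))
    obtain ⟨Ae, Be, hQeq⟩ := List.append_of_mem heQ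
    subst hQeq
    have hjAe : jnV P Ae = P.src e := by
      have h1 := src_head_of_split hQe (by simp : (e :: Be) ≠ [])
      simpa using h1.symm
    have hAeq : pathLen P H A = pathLen P H Ae :=
      key1 hAB hlen hQe hQel ((hj e rfl).trans hjAe.symm)
    by_cases hR' : R' = []
    · subst hR'
      have hdt : P.dst e = P.t := hlast e rfl
      have hBe : Be = [] := by
        cases Be with
        | nil => rfl
        | cons g r =>
          exfalso
          have hc2 := (List.isChain_append.mp hQe.2.2.1).2.1
          have h3 := (List.isChain_cons_cons.mp hc2).1
          exact P.t_no_out g (by rw [← h3, hdt])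
      subst hBe
      rw [pathLen_append] at hQel
      rw [hAeq]
      linarith
    · have hch' : EChain P R' := List.IsChain.tail hch
      rcases R' with _ | ⟨g, r⟩
      · exact absurd rfl hR'
      have hQe' : IsPath P H ((Ae ++ [e]) ++ Be) := by
        simpa [List.append_assoc] using hQe
      have hlen' : pathLen P H ((Ae ++ [e]) ++ Be) = duration P H := by
        simpa [List.append_assoc] using hQel
      have hstep := ih hR' (fun f hf => hmem f (List.mem_cons_of_mem _ hf)) hch'
        (fun f hf => hlast f (by rw [List.getLast?_cons_cons]; exact hf))
        (Ae ++ [e]) Be hQe' hlen'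
        (by
          intro f hf
          simp only [List.head?_cons, Option.mem_some_iff] at hf
          subst hf
          rw [jnV_concat]
          exact (List.isChain_cons_cons.mp hch).1)
      rw [pathLen_append] at hstep
      rw [hAeq, pathLen_cons]
      have h5 : pathLen P H [e] = H.len e := by simp [pathLen]
      linarith

lemma allcrit_pathLen {H : State P} (E₀ : Finset P.E)
    (hcrit : ∀ e ∈ E₀, ∃ Q, IsPath P H Q ∧ pathLen P H Q = duration P H ∧ e ∈ Q)
    {es : List P.E} (hne : es ≠ []) (hmem : ∀ f ∈ es, f ∈ E₀) (hch : EChain P es)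
    (hh : ∀ f ∈ es.head?, P.src f = P.s) (hl : ∀ f ∈ es.getLast?, P.dst f = P.t) :
    pathLen P H es = duration P H := by
  obtain ⟨Q, hQ, hQl, -⟩ := hcrit (es.head hne) (hmem _ (List.head_mem hne))
  have h := claimR E₀ hcrit es hne hmem hch hl [] Q (by simpa using hQ) (by simpa using hQl)
    (fun f hf => by rw [jnV_nil, hh f hf])
  simpa [pathLen] using h

lemma list_sum_map_sub {α : Type*} (g h : α → ℤ) (l : List α) :
    (l.map (fun x => g x - h x)).sum = (l.map g).sum - (l.map h).sum := by
  induction l with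
  | nil => simp
  | cons a l ih => simp only [List.map_cons, List.sum_cons, ih]; ring

lemma build_chain {Q : P.E → Prop} {e : P.E}
    (hA : Relation.ReflTransGen (stepRel P Q) P.s (P.src e))
    (hB : Relation.ReflTransGen (stepRel P Q) (P.dst e) P.t) :
    ∃ A B : List P.E, (∀ f ∈ A, Q f) ∧ (∀ f ∈ B, Q f) ∧
      EChain P (A ++ e :: B) ∧
      (∀ f ∈ (A ++ e :: B).head?, P.src f = P.s) ∧
      (∀ f ∈ (A ++ e :: B).getLast?, P.dst f = P.t) := by
  rcases rtg_list hA with hsa | ⟨A, hAne, hAQ, hAch, hAh, hAl⟩ <;>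
    rcases rtg_list hB with hbt | ⟨B, hBne, hBQ, hBch, hBh, hBl⟩
  · refine ⟨[], [], by simp, by simp, List.isChain_singleton e, ?_, ?_⟩
    · intro f hf
      simp only [List.nil_append, List.head?_cons, Option.mem_some_iff] at hf
      subst hf; exact hsa.symm
    · intro f hf
      simp only [List.nil_append, List.getLast?_singleton, Option.mem_some_iff] at hf
      subst hf; exact hbt
  · refine ⟨[], B, by simp, hBQ, ?_, ?_, ?_⟩
    · rw [List.nil_append]
      exact List.isChain_cons.mpr ⟨fun y hy => (hBh y hy).symm, hBch⟩
    · intro f hf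
      simp only [List.nil_append, List.head?_cons, Option.mem_some_iff] at hf
      subst hf; exact hsa.symm
    · intro f hf
      rw [List.nil_append, getLast?_cons_ne e hBne] at hf
      exact hBl f hf
  · refine ⟨A, [], hAQ, by simp, ?_, ?_, ?_⟩
    · refine List.isChain_append.mpr ⟨hAch, List.isChain_singleton e, ?_⟩
      intro x hx y hy
      simp only [List.head?_cons, Option.mem_some_iff] at hy
      subst hy
      exact hAl x hx
    · intro f hf
      rw [head?_append_left _ hAne] at hf
      exact hAh f hf
    · intro f hf
      rw [List.getLast?_concat] at hf
      simp only [Option.mem_some_iff] at hf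
      subst hf; exact hbt
  · refine ⟨A, B, hAQ, hBQ, ?_, ?_, ?_⟩
    · refine List.isChain_append.mpr ⟨hAch, ?_, ?_⟩
      · exact List.isChain_cons.mpr ⟨fun y hy => (hBh y hy).symm, hBch⟩
      · intro x hx y hy
        simp only [List.head?_cons, Option.mem_some_iff] at hy
        subst hy
        exact hAl x hx
    · intro f hf
      rw [head?_append_left _ hAne] at hf
      exact hAh f hf
    · intro f hf
      rw [List.getLast?_append_of_ne_nil _ (by simp : e :: B ≠ []),
        getLast?_cons_ne e hBne] at hf
      exact hBl f hf

end CrashAux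
/-- in the decomposition, `cost(C_i) ≤ cost(C_{i+1})` for `1 ≤ i < k`. -/
theorem decomp_cut_cost_mono (P : Project) (k : ℕ) (hkmax : (k : ℤ) ≤ Project.kmax P)
    (X : P.E → ℕ) (hX : Project.Crashing P (k : ℤ) X)
    (Ns : ℕ → Project.State P) (Xs : ℕ → P.E → ℕ) (Cs : ℕ → Finset P.E)
    (hD : Project.Decomp P X k Ns Xs Cs)
    (i : ℕ) (hi1 : 1 ≤ i) (hik : i < k) :
    Project.costSet P (Cs i) ≤ Project.costSet P (Cs (i + 1)) := by
  classical
  open CrashAux Project in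
  obtain ⟨hN1, hX1, hmin, hstepD⟩ := hD
  have h1 := hmin i hi1 (le_of_lt hik)
  have h2 := hmin (i+1) (by omega) (by omega)
  obtain ⟨hNs, hXs⟩ := hstepD (i+1) (by omega) (by omega)
  simp only [Nat.add_sub_cancel] at hNs hXs
  obtain ⟨⟨S₁, hs₁S, ht₁S, hC₁def⟩, hC₁supp, hC₁min⟩ := h1
  obtain ⟨⟨S₂, hs₂S, ht₂S, hC₂def⟩, hC₂supp, hC₂min⟩ := h2
  set M : Project.State P := Project.critical P (Ns i) with hM
  set d : ℤ := Project.duration P (Ns i) with hd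
  have hst : P.s ≠ P.t := fun h => ht₁S (h ▸ hs₁S)
  have hMedges : M.edges ⊆ (Ns i).edges := Finset.filter_subset _ _
  have hN1edges : (Ns (i+1)).edges = M.edges := by rw [hNs]; rfl
  have hM'sub : (Project.critical P (Ns (i+1))).edges ⊆ M.edges := by
    rw [← hN1edges]; exact Finset.filter_subset _ _
  have hC₂M' : Cs (i+1) ⊆ (Project.critical P (Ns (i+1))).edges := by
    rw [hC₂def]; exact Finset.filter_subset _ _
  have hC₁M : Cs i ⊆ M.edges := by rw [hC₁def]; exact Finset.filter_subset _ _
  set avoid : Finset P.E := Cs i ∪ Cs (i+1) with havoid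
  have havoidsupp : ∀ e ∈ avoid, 1 ≤ Xs i e := by
    intro e he
    rcases Finset.mem_union.mp he with h | h
    · exact hC₁supp e h
    · have h5 := hC₂supp e h
      rw [hXs] at h5
      exact le_trans h5 (Nat.sub_le _ _)
  have hcrit : ∀ e ∈ M.edges, ∃ Q, Project.IsPath P (Ns i) Q ∧
      Project.pathLen P (Ns i) Q = Project.duration P (Ns i) ∧ e ∈ Q := by
    intro e he
    exact (Finset.mem_filter.mp he).2
  -- every s-t chain within M contains an edge of C₁
  have hhasC₁ : ∀ es : List P.E, es ≠ [] → (∀ f ∈ es, f ∈ M.edges) → EChain P es →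
      (∀ f ∈ es.head?, P.src f = P.s) → (∀ f ∈ es.getLast?, P.dst f = P.t) →
      ∃ f ∈ es, f ∈ Cs i := by
    intro es hne hmem hch hh hl
    obtain ⟨f, hf, hf1, hf2⟩ := exists_crossing S₁ es hne hch
      (fun g hg => by rw [hh g hg]; exact hs₁S)
      (fun g hg => by rw [hl g hg]; exact ht₁S)
    exact ⟨f, hf, by rw [hC₁def]; exact Finset.mem_filter.mpr ⟨hmem f hf, hf1, hf2⟩⟩
  set Qp : P.E → Prop := fun f => f ∈ M.edges ∧ f ∉ avoid with hQp
  set stepR : P.V → P.V → Prop := CrashAux.stepRel P Qp with hstepR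
  have hnoreach : ¬ Relation.ReflTransGen stepR P.s P.t := by
    intro h
    rcases rtg_list h with h' | ⟨es, hne, hQ, hch, hh, hl⟩
    · exact hst h'
    · obtain ⟨f, hf, hfC₁⟩ := hhasC₁ es hne (fun g hg => (hQ g hg).1) hch hh hl
      exact (hQ f hf).2 (Finset.mem_union_left _ hfC₁)
  set Tm : Finset P.V := Finset.univ.filter (fun v => Relation.ReflTransGen stepR P.s v)
    with hTm
  set Tp : Finset P.V := Finset.univ.filter (fun v => ¬ Relation.ReflTransGen stepR v P.t)
    with hTp
  have hmemTm : ∀ v, v ∈ Tm ↔ Relation.ReflTransGen stepR P.s v := by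
    intro v; rw [hTm]; simp
  have hmemTp : ∀ v, v ∈ Tp ↔ ¬ Relation.ReflTransGen stepR v P.t := by
    intro v; rw [hTp]; simp
  have hsTm : P.s ∈ Tm := (hmemTm _).mpr Relation.ReflTransGen.refl
  have htTm : P.t ∉ Tm := fun h => hnoreach ((hmemTm _).mp h)
  have hsTp : P.s ∈ Tp := (hmemTp _).mpr hnoreach
  have htTp : P.t ∉ Tp := fun h => ((hmemTp _).mp h) Relation.ReflTransGen.refl
  set Dm : Finset P.E := M.edges.filter (fun e => P.src e ∈ Tm ∧ P.dst e ∉ Tm) with hDm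
  set Dp : Finset P.E := M.edges.filter (fun e => P.src e ∈ Tp ∧ P.dst e ∉ Tp) with hDp
  have hDmcut : Project.IsCut P M Dm := ⟨Tm, hsTm, htTm, rfl⟩
  have hDpcut : Project.IsCut P M Dp := ⟨Tp, hsTp, htTp, rfl⟩
  have hDmavoid : Dm ⊆ avoid := by
    intro e he
    obtain ⟨heM, hsrc, hdst⟩ := Finset.mem_filter.mp he
    by_contra hea
    exact hdst ((hmemTm _).mpr (((hmemTm _).mp hsrc).tail ⟨e, ⟨heM, hea⟩, rfl, rfl⟩))
  have hDpavoid : Dp ⊆ avoid := by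
    intro e he
    obtain ⟨heM, hsrc, hdst⟩ := Finset.mem_filter.mp he
    by_contra hea
    have hdst' : Relation.ReflTransGen stepR (P.dst e) P.t := by
      by_contra h'
      exact hdst ((hmemTp _).mpr h')
    exact ((hmemTp _).mp hsrc) (Relation.ReflTransGen.head ⟨e, ⟨heM, hea⟩, rfl, rfl⟩ hdst')
  have hmDm : Project.costSet P (Cs i) ≤ Project.costSet P Dm :=
    hC₁min Dm hDmcut (fun e he => havoidsupp e (hDmavoid he))
  have hmDp : Project.costSet P (Cs i) ≤ Project.costSet P Dp :=
    hC₁min Dp hDpcut (fun e he => havoidsupp e (hDpavoid he))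
  -- building an s-t chain through a doubly-crossing edge
  have hsplice : ∀ e, e ∈ Dm → e ∈ Dp →
      ∃ A B : List P.E, (∀ f ∈ A, Qp f) ∧ (∀ f ∈ B, Qp f) ∧
        EChain P (A ++ e :: B) ∧
        (∀ f ∈ (A ++ e :: B).head?, P.src f = P.s) ∧
        (∀ f ∈ (A ++ e :: B).getLast?, P.dst f = P.t) := by
    intro e hem hep
    obtain ⟨heM, hsrc, -⟩ := Finset.mem_filter.mp hem
    obtain ⟨-, -, hdst⟩ := Finset.mem_filter.mp hep
    have hA : Relation.ReflTransGen stepR P.s (P.src e) := (hmemTm _).mp hsrc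
    have hB : Relation.ReflTransGen stepR (P.dst e) P.t := by
      by_contra h'
      exact hdst ((hmemTp _).mpr h')
    exact build_chain hA hB
  -- HARD 1 : an edge of both `Dm` and `Dp` must lie in `C₁`
  have hard1 : ∀ e, e ∈ Dm → e ∈ Dp → e ∈ Cs i := by
    intro e hem hep
    by_contra heC₁
    obtain ⟨A, B, hAQ, hBQ, hch, hh, hl⟩ := hsplice e hem hep
    have heM : e ∈ M.edges := (Finset.mem_filter.mp hem).1
    obtain ⟨f, hf, hfC₁⟩ := hhasC₁ (A ++ e :: B) (by simp) (by
        intro g hg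
        rcases List.mem_append.mp hg with h' | h'
        · exact (hAQ g h').1
        · rcases List.mem_cons.mp h' with rfl | h''
          · exact heM
          · exact (hBQ g h'').1) hch hh hl
    rcases List.mem_append.mp hf with h' | h'
    · exact (hAQ f h').2 (Finset.mem_union_left _ hfC₁)
    · rcases List.mem_cons.mp h' with rfl | h''
      · exact heC₁ hfC₁
      · exact (hBQ f h'').2 (Finset.mem_union_left _ hfC₁)
  -- the length bookkeeping between `Ns i` and `Ns (i+1)`
  have hlen_shift : ∀ es : List P.E, Project.pathLen P (Ns (i+1)) es =
      Project.pathLen P (Ns i) es - (es.map fun f => if f ∈ Cs i then (1:ℤ) else 0).sum := by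
    intro es
    rw [hNs]
    have h6 : Project.pathLen P (Project.shorten P M (Cs i)) es
        = (es.map fun f => (Ns i).len f - if f ∈ Cs i then (1:ℤ) else 0).sum := rfl
    rw [h6, list_sum_map_sub]
    rfl
  -- HARD 2 : an edge of both `Dm` and `Dp` lying in `C₁` must also lie in `C₂`
  have hard2 : ∀ e, e ∈ Dm → e ∈ Dp → e ∈ Cs i → e ∈ Cs (i+1) := by
    intro e hem hep heC₁
    by_contra heC₂
    obtain ⟨A, B, hAQ, hBQ, hch, hh, hl⟩ := hsplice e hem hep
    set es : List P.E := A ++ e :: B with hes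
    have hesM : ∀ f ∈ es, f ∈ M.edges := by
      intro g hg
      rcases List.mem_append.mp hg with h' | h'
      · exact (hAQ g h').1
      · rcases List.mem_cons.mp h' with rfl | h''
        · exact hC₁M heC₁
        · exact (hBQ g h'').1
    have hesne : es ≠ [] := by simp [hes]
    have hpathNi : Project.IsPath P (Ns i) es :=
      ⟨hesne, fun f hf => hMedges (hesM f hf), hch, hh, hl⟩
    have hlen_i : Project.pathLen P (Ns i) es = d :=
      allcrit_pathLen M.edges hcrit hesne hesM hch hh hl
    have hcnt : (es.map fun f => if f ∈ Cs i then (1:ℤ) else 0).sum = 1 := by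
      rw [hes, List.map_append, List.sum_append, List.map_cons, List.sum_cons]
      rw [List.sum_eq_zero, List.sum_eq_zero, if_pos heC₁]
      · ring
      · intro x hx
        obtain ⟨f, hf, rfl⟩ := List.mem_map.mp hx
        exact if_neg (fun h => (hBQ f hf).2 (Finset.mem_union_left _ h))
      · intro x hx
        obtain ⟨f, hf, rfl⟩ := List.mem_map.mp hx
        exact if_neg (fun h => (hAQ f hf).2 (Finset.mem_union_left _ h))
    have hpath1 : Project.IsPath P (Ns (i+1)) es :=
      ⟨hesne, fun f hf => by rw [hN1edges]; exact hesM f hf, hch, hh, hl⟩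
    have hlen1 : Project.pathLen P (Ns (i+1)) es = d - 1 := by
      rw [hlen_shift, hlen_i, hcnt]
    have hdur1 : Project.duration P (Ns (i+1)) = d - 1 := by
      refine le_antisymm ?_ ?_
      · refine duration_le ⟨es, hpath1⟩ ?_
        intro Q hQp'
        have hQM : ∀ f ∈ Q, f ∈ M.edges := by
          intro f hf
          have := hQp'.2.1 f hf
          rwa [hN1edges] at this
        have hQd : Project.pathLen P (Ns i) Q = d :=
          allcrit_pathLen M.edges hcrit hQp'.1 hQM hQp'.2.2.1 hQp'.2.2.2.1 hQp'.2.2.2.2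
        obtain ⟨f, hf, hfC₁⟩ := hhasC₁ Q hQp'.1 hQM hQp'.2.2.1 hQp'.2.2.2.1 hQp'.2.2.2.2
        have hge : (1:ℤ) ≤ (Q.map fun g => if g ∈ Cs i then (1:ℤ) else 0).sum := by
          have h7 := List.single_le_sum (l := Q.map fun g => if g ∈ Cs i then (1:ℤ) else 0)
            (by
              intro x hx
              obtain ⟨g, hg, rfl⟩ := List.mem_map.mp hx
              split <;> norm_num)
            _ (List.mem_map_of_mem hf)
          rwa [if_pos hfC₁] at h7
        rw [hlen_shift, hQd]
        linarith
      · have h8 := pathLen_le_duration hpath1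
        rwa [hlen1] at h8
    have hcritmem : ∀ f ∈ es, f ∈ (Project.critical P (Ns (i+1))).edges := by
      intro f hf
      refine Finset.mem_filter.mpr ⟨by rw [hN1edges]; exact hesM f hf, es, hpath1, ?_, hf⟩
      rw [hlen1, hdur1]
    obtain ⟨f, hf, hf1, hf2⟩ := exists_crossing S₂ es hesne hch
      (fun g hg => by rw [hh g hg]; exact hs₂S)
      (fun g hg => by rw [hl g hg]; exact ht₂S)
    have hfC₂ : f ∈ Cs (i+1) := by
      rw [hC₂def]
      exact Finset.mem_filter.mpr ⟨hcritmem f hf, hf1, hf2⟩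
    rcases List.mem_append.mp hf with h' | h'
    · exact (hAQ f h').2 (Finset.mem_union_right _ hfC₂)
    · rcases List.mem_cons.mp h' with rfl | h''
      · exact heC₂ hfC₂
      · exact (hBQ f h'').2 (Finset.mem_union_right _ hfC₂)
  -- the cost comparison
  have hrw : ∀ D : Finset P.E, D ⊆ avoid →
      Project.costSet P D = ∑ e ∈ avoid, if e ∈ D then P.c e else 0 := by
    intro D hsub
    rw [Project.costSet, ← Finset.sum_filter, Finset.filter_mem_eq_inter,
      Finset.inter_eq_right.mpr hsub]
  have key : Project.costSet P Dm + Project.costSet P Dp ≤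
      Project.costSet P (Cs i) + Project.costSet P (Cs (i+1)) := by
    rw [hrw Dm hDmavoid, hrw Dp hDpavoid,
      hrw (Cs i) Finset.subset_union_left, hrw (Cs (i+1)) Finset.subset_union_right,
      ← Finset.sum_add_distrib, ← Finset.sum_add_distrib]
    refine Finset.sum_le_sum ?_
    intro e he
    have hc := P.cost_nonneg e
    by_cases h1' : e ∈ Cs i <;> by_cases h2' : e ∈ Cs (i+1)
    · have ha : (if e ∈ Dm then P.c e else 0) ≤ P.c e := by split <;> simp [hc]
      have hb : (if e ∈ Dp then P.c e else 0) ≤ P.c e := by split <;> simp [hc]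
      rw [if_pos h1', if_pos h2']
      linarith
    · by_cases hm' : e ∈ Dm <;> by_cases hp' : e ∈ Dp
      · exact absurd (hard2 e hm' hp' h1') h2'
      · rw [if_pos hm', if_neg hp', if_pos h1', if_neg h2']
      · rw [if_neg hm', if_pos hp', if_pos h1', if_neg h2']
        linarith
      · rw [if_neg hm', if_neg hp', if_pos h1', if_neg h2']
        linarith
    · by_cases hm' : e ∈ Dm <;> by_cases hp' : e ∈ Dp
      · exact absurd (hard1 e hm' hp') h1'
      · rw [if_pos hm', if_neg hp', if_neg h1', if_pos h2']
        linarith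
      · rw [if_neg hm', if_pos hp', if_neg h1', if_pos h2']
      · rw [if_neg hm', if_neg hp', if_neg h1', if_pos h2']
        linarith
    · exact absurd he (by rw [havoid]; simp [h1', h2'])
  linarith
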